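/- arXiv:2112.08825 — 3 statements merged into one kernel-verified Lean document; each statement's English description precedes it below -/
import Mathlib

section
/- Let G be a 2-connected graph and let e and f be any two edges of G. Then there is a cycle of G containing both e and f. -/
open SimpleGraph

/-- A graph is cubic if every vertex has exactly 3 neighbors. -/
def CubicGraph {V : Type*} (G : SimpleGraph V) : Prop :=
  ∀ v : V, (G.neighborSet v).ncard = 3

/-- `G` is `k`-connected: more than `k` vertices, and deleting any set of
fewer than `k` vertices leaves a connected graph. -/
def KConn {V : Type*} [Fintype V] (k : ℕ) (G : SimpleGraph V) : Prop :=
  k < Fintype.card V ∧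
  ∀ S : Finset V, S.card < k → (G.induce ((↑S : Set V)ᶜ)).Connected

/-- There is a cycle through `v` in `G`. -/
def HasCycleAt {V : Type*} (G : SimpleGraph V) (v : V) : Prop :=
  ∃ c : G.Walk v v, c.IsCycle

/-- A set `X` of edges is cycle-separating: after deleting `X`, at least two
distinct connected components contain cycles. -/
def CycleSeparating {V : Type*} (G : SimpleGraph V) (X : Set (Sym2 V)) : Prop :=
  ∃ u v : V, HasCycleAt (G.deleteEdges X) u ∧ HasCycleAt (G.deleteEdges X) v ∧
    (G.deleteEdges X).connectedComponentMk u ≠ (G.deleteEdges X).connectedComponentMk v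

/-- A cubic graph is cyclically `k`-connected if it is 3-connected, has at least
`2k` vertices, and has no cycle-separating edge-cut of size less than `k`. -/
def CyclicallyKConn {V : Type*} [Fintype V] (k : ℕ) (G : SimpleGraph V) : Prop :=
  KConn 3 G ∧ 2 * k ≤ Fintype.card V ∧
  ∀ X : Finset (Sym2 V), ↑X ⊆ G.edgeSet → X.card < k → ¬ CycleSeparating G ↑X

/-- Edges `ab` and `cd` are non-adjacent edges of `G` (they share no endpoint). -/
def NonadjPair {V : Type*} (G : SimpleGraph V) (a b c d : V) : Prop :=
  G.Adj a b ∧ G.Adj c d ∧ a ≠ c ∧ a ≠ d ∧ b ≠ c ∧ b ≠ d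

/-- The graph obtained from `H` by bridging edges `ab` and `cd`: subdivide `ab`
with a new vertex `x = Sum.inr 0`, subdivide `cd` with a new vertex `y = Sum.inr 1`,
and join `x` to `y`. -/
def Bridge {V : Type*} (H : SimpleGraph V) (a b c d : V) : SimpleGraph (V ⊕ Fin 2) :=
  SimpleGraph.fromEdgeSet
    ((Sym2.map Sum.inl '' (H.edgeSet \ {s(a, b), s(c, d)})) ∪
      {s(Sum.inr 0, Sum.inl a), s(Sum.inr 0, Sum.inl b),
       s(Sum.inr 1, Sum.inl c), s(Sum.inr 1, Sum.inl d),
       s(Sum.inr 0, Sum.inr 1)})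

/-- Both edges `e` and `f` lie on a common 4-cycle of `G`. -/
def InCommonCycle4 {V : Type*} (G : SimpleGraph V) (e f : Sym2 V) : Prop :=
  ∃ (v : V) (c : G.Walk v v), c.IsCycle ∧ c.length = 4 ∧ e ∈ c.edges ∧ f ∈ c.edges

/-- The ladder `Q_{2k}`: the Cartesian product of the cycle `C_k` with `K_2`. -/
def LadderQ (k : ℕ) : SimpleGraph (Fin k × Fin 2) :=
  SimpleGraph.cycleGraph k □ completeGraph (Fin 2)

/-- The Möbius ladder `V_{2k}`: the circulant graph on `ZMod (2k)` with
connection set `{1, -1, k}`. -/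
def MobiusV (k : ℕ) : SimpleGraph (ZMod (2 * k)) :=
  SimpleGraph.circulantGraph {1, -1, (k : ZMod (2 * k))}

/-- The Petersen graph: vertices are the 2-element subsets of a 5-element set,
adjacent iff disjoint (the Kneser graph K(5,2)). -/
def Petersen : SimpleGraph {s : Finset (Fin 5) // s.card = 2} where
  Adj s t := Disjoint (s : Finset (Fin 5)) (t : Finset (Fin 5))
  symm := ⟨fun s t h => h.symm⟩
  loopless := ⟨fun s h => by
    have h2 := s.2
    simp only [disjoint_self, Finset.bot_eq_empty] at h
    rw [h] at h2
    simp at h2⟩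

section Stmt5AuxSection

open SimpleGraph.Walk

variable {V : Type*} [DecidableEq V]


namespace Stmt5Aux


lemma end_mem_tail {G : SimpleGraph V} {u v : V} (p : G.Walk u v) (h : u ≠ v) :
    v ∈ p.support.tail := by
  cases p with
  | nil => exact absurd rfl h
  | cons h' q => simpa using q.end_mem_support

lemma mem_support_iff_tail {G : SimpleGraph V} {u : V} (c : G.Walk u u) (hc : ¬ c.Nil) {y : V} :
    y ∈ c.support ↔ y ∈ c.support.tail := by
  cases c with
  | nil => simp at hc
  | cons h q =>
    simp only [support_cons, List.tail_cons, List.mem_cons]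
    constructor
    · rintro (rfl | hy)
      · exact q.end_mem_support
      · exact hy
    · exact Or.inr

lemma mem_support_rotate {G : SimpleGraph V} {u w : V} (c : G.Walk u u) (hc : c.IsCycle)
    (hw : w ∈ c.support) {y : V} : y ∈ (c.rotate _ hw).support ↔ y ∈ c.support := by
  have h1 : ¬ c.Nil := hc.not_nil
  have h2 : ¬ (c.rotate _ hw).Nil := (hc.rotate hw).not_nil
  rw [mem_support_iff_tail _ h2, mem_support_iff_tail _ h1]
  exact (support_rotate c _ hw).mem_iff

/-- Splitting a cycle at a non-base vertex gives two paths. -/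
lemma cycle_split {G : SimpleGraph V} {w x : V} (c : G.Walk w w) (hc : c.IsCycle)
    (hx : x ∈ c.support) (hxw : x ≠ w) :
    (c.takeUntil x hx).IsPath ∧ (c.dropUntil x hx).IsPath := by
  set t := c.takeUntil x hx with ht
  set d := c.dropUntil x hx with hd
  have hspec : t.append d = c := c.take_spec hx
  have hsup : c.support = t.support ++ d.support.tail := by
    rw [← hspec, support_append]
  have htc : t.support = w :: t.support.tail := t.support_eq_cons
  have hdc : d.support = x :: d.support.tail := d.support_eq_cons
  have htail : c.support.tail = t.support.tail ++ d.support.tail := by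
    have h2 : c.support = w :: (t.support.tail ++ d.support.tail) := by
      rw [hsup, htc]; simp only [List.cons_append, List.tail_cons]
    rw [h2, List.tail_cons]
  have hnd : (t.support.tail ++ d.support.tail).Nodup := by
    rw [← htail]; exact hc.2
  rw [List.nodup_append] at hnd
  have hwd : w ∈ d.support.tail := end_mem_tail d hxw
  have hxt : x ∈ t.support.tail := end_mem_tail t (Ne.symm hxw)
  constructor
  · rw [isPath_def, htc, List.nodup_cons]
    exact ⟨fun hw' => hnd.2.2 _ hw' _ hwd rfl, hnd.1⟩
  · rw [isPath_def, hdc, List.nodup_cons]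
    exact ⟨fun hx' => hnd.2.2 _ hxt _ hx' rfl, hnd.2.1⟩

lemma isPath_append {G : SimpleGraph V} {u v w : V} {p : G.Walk u v} {q : G.Walk v w}
    (hp : p.IsPath) (hq : q.IsPath)
    (h : ∀ y, y ∈ p.support → y ∈ q.support → y = v) : (p.append q).IsPath := by
  rw [isPath_def, support_append, List.nodup_append]
  have hqc : q.support = v :: q.support.tail := q.support_eq_cons
  have hqn : q.support.Nodup := hq.support_nodup
  rw [hqc, List.nodup_cons] at hqn
  refine ⟨hp.support_nodup, hqn.2, ?_⟩
  intro a hap b hat hab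
  subst hab
  have hav : a = v := h a hap (by rw [hqc]; exact List.mem_cons_of_mem _ hat)
  subst hav
  exact hqn.1 hat

/-- First-hit: given a walk ending in `S`, there is a path hitting `S` only at its end. -/
lemma first_hit_aux {G : SimpleGraph V} (S : Set V) :
    ∀ {v a : V} (p : G.Walk v a), a ∈ S →
      ∃ z, z ∈ S ∧ ∃ q : G.Walk v z, (∀ y ∈ q.support, y ∈ S → y = z) ∧
        (∀ y ∈ q.support, y ∈ p.support) := by
  intro v a p
  induction p with
  | nil =>
    intro ha
    exact ⟨_, ha, Walk.nil, by simp +contextual, by simp⟩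
  | @cons v b a h p ih =>
    intro ha
    by_cases hv : v ∈ S
    · exact ⟨v, hv, Walk.nil, by simp +contextual, by simp⟩
    · obtain ⟨z, hz, q, hq1, hq2⟩ := ih ha
      refine ⟨z, hz, Walk.cons h q, ?_, ?_⟩
      · intro y hy hyS
        rw [support_cons, List.mem_cons] at hy
        rcases hy with rfl | hy
        · exact absurd hyS hv
        · exact hq1 y hy hyS
      · intro y hy
        rw [support_cons, List.mem_cons] at hy ⊢
        rcases hy with rfl | hy
        · exact Or.inl rfl
        · exact Or.inr (hq2 y hy)

lemma first_hit {G : SimpleGraph V} (S : Set V) {v a : V} (p : G.Walk v a) (ha : a ∈ S) :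
    ∃ z, z ∈ S ∧ ∃ q : G.Walk v z, q.IsPath ∧ (∀ y ∈ q.support, y ∈ S → y = z) ∧
      (∀ y ∈ q.support, y ∈ p.support) := by
  obtain ⟨z, hz, q, hq1, hq2⟩ := first_hit_aux S p ha
  exact ⟨z, hz, q.bypass, q.bypass_isPath,
    fun y hy => hq1 y (q.support_bypass_subset hy),
    fun y hy => hq2 y (q.support_bypass_subset hy)⟩


/-- Extract from a cycle an arc from `x` to the base `w` through a given edge. -/
lemma arc_lemma {G : SimpleGraph V} {w x : V} (c : G.Walk w w) (hc : c.IsCycle)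
    (hx : x ∈ c.support) (hxw : x ≠ w) {a b : V} (he : s(a, b) ∈ c.edges) :
    ∃ arc : G.Walk x w, arc.IsPath ∧ s(a, b) ∈ arc.edges ∧
      arc.support ⊆ c.support ∧ arc.edges ⊆ c.edges := by
  obtain ⟨ht, hd⟩ := cycle_split c hc hx hxw
  have hedges : c.edges = (c.takeUntil x hx).edges ++ (c.dropUntil x hx).edges := by
    rw [← edges_append, take_spec]
  have hsplit : s(a, b) ∈ (c.takeUntil x hx).edges ∨ s(a, b) ∈ (c.dropUntil x hx).edges := by
    rw [hedges, List.mem_append] at he; exact he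
  rcases hsplit with h | h
  · refine ⟨(c.takeUntil x hx).reverse, ht.reverse, by rwa [edges_reverse, List.mem_reverse],
      ?_, ?_⟩
    · intro y hy
      rw [support_reverse, List.mem_reverse] at hy
      exact c.support_takeUntil_subset hx hy
    · intro y hy
      rw [edges_reverse, List.mem_reverse] at hy
      exact c.edges_takeUntil_subset hx hy
  · exact ⟨c.dropUntil x hx, hd, h, c.support_dropUntil_subset hx, c.edges_dropUntil_subset hx⟩

variable [Fintype V]

lemma avoid {G : SimpleGraph V} (h2 : KConn 2 G) (w : V) {x y : V}
    (hx : x ≠ w) (hy : y ≠ w) : ∃ p : G.Walk x y, w ∉ p.support := by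
  have hconn := h2.2 {w} (by simp)
  have hxm : x ∈ (↑({w} : Finset V) : Set V)ᶜ := by simp [hx]
  have hym : y ∈ (↑({w} : Finset V) : Set V)ᶜ := by simp [hy]
  obtain ⟨W⟩ := hconn ⟨x, hxm⟩ ⟨y, hym⟩
  refine ⟨W.map (SimpleGraph.Embedding.induce _).toHom, ?_⟩
  intro hw
  have hw' : w ∈ (W.map (SimpleGraph.Embedding.induce ((↑({w} : Finset V) : Set V)ᶜ)).toHom).support := hw
  rw [Walk.support_map, List.mem_map] at hw'
  obtain ⟨z, _, hzw⟩ := hw'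
  have hz2 := z.2
  simp only [Set.mem_compl_iff, Finset.coe_singleton, Set.mem_singleton_iff] at hz2
  exact hz2 (by simpa using hzw)

lemma exists_third (h : 2 < Fintype.card V) (a b : V) : ∃ w, w ≠ a ∧ w ≠ b := by
  by_contra hcon
  push_neg at hcon
  have hsub : (Finset.univ : Finset V) ⊆ {a, b} := by
    intro w _
    by_cases hwa : w = a
    · simp [hwa]
    · simp [hcon w hwa]
  have h1 := Finset.card_le_card hsub
  have h2 : ({a, b} : Finset V).card ≤ 2 := Finset.card_le_two
  rw [Finset.card_univ] at h1
  omega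

lemma exists_other_neighbor {G : SimpleGraph V} (h2 : KConn 2 G) {a b : V}
    (hab : G.Adj a b) : ∃ w, G.Adj a w ∧ w ≠ b := by
  by_contra hcon
  push_neg at hcon
  obtain ⟨u, hua, hub⟩ := exists_third h2.1 a b
  have hconn := h2.2 {b} (by simp)
  have ham : a ∈ (↑({b} : Finset V) : Set V)ᶜ := by simp [hab.ne]
  have hum : u ∈ (↑({b} : Finset V) : Set V)ᶜ := by simp [hub]
  obtain ⟨W⟩ := hconn ⟨a, ham⟩ ⟨u, hum⟩
  have hnil : ¬ W.Nil := by
    intro hnil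
    have := Walk.Nil.eq hnil
    exact hua (congrArg Subtype.val this).symm
  have hadj := Walk.adj_snd hnil
  have hadj' : G.Adj a (W.getVert 1).val := hadj
  have hb := hcon _ hadj'
  have h2' := (W.getVert 1).2
  rw [hb] at h2'
  simp at h2'

lemma edge_cycle {G : SimpleGraph V} (h2 : KConn 2 G) {a b : V} (hab : G.Adj a b) :
    ∃ (r : V) (c : G.Walk r r), c.IsCycle ∧ s(a, b) ∈ c.edges := by
  obtain ⟨w, haw, hwb⟩ := exists_other_neighbor h2 hab
  obtain ⟨p0, hp0⟩ := avoid h2 a (x := w) (y := b) haw.ne' hab.ne'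
  set p := p0.bypass with hp
  have hpath : p.IsPath := p0.bypass_isPath
  have hap : a ∉ p.support := fun h => hp0 (p0.support_bypass_subset h)
  have hp1 : (Walk.cons haw p).IsPath := hpath.cons hap
  have hne : s(b, a) ∉ (Walk.cons haw p).edges := by
    rw [edges_cons, List.mem_cons]
    rintro (h | h)
    · rw [Sym2.eq_iff] at h
      rcases h with ⟨h1, _⟩ | ⟨h1, _⟩
      · exact hab.ne' h1
      · exact hwb h1.symm
    · exact hap (p.snd_mem_support_of_mem_edges h)
  have hcyc := SimpleGraph.Path.cons_isCycle ⟨Walk.cons haw p, hp1⟩ hab.symm hne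
  refine ⟨b, _, hcyc, ?_⟩
  rw [edges_cons]
  exact List.mem_cons.2 (Or.inl Sym2.eq_swap)

lemma extend {G : SimpleGraph V} (h2 : KConn 2 G) {a b r w v : V}
    (c : G.Walk r r) (hc : c.IsCycle) (he : s(a, b) ∈ c.edges)
    (hw : w ∈ c.support) (hv : v ∉ c.support) (hwv : G.Adj w v) :
    ∃ (r' : V) (c' : G.Walk r' r'), c'.IsCycle ∧ s(a, b) ∈ c'.edges ∧ v ∈ c'.support := by
  set c' := c.rotate _ hw with hc'def
  have hc' : c'.IsCycle := hc.rotate hw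
  have he' : s(a, b) ∈ c'.edges := (rotate_edges c _ hw).mem_iff.2 he
  have hsupp : ∀ y, y ∈ c'.support ↔ y ∈ c.support := fun y => mem_support_rotate c hc hw
  have hva : a ∈ c'.support := c'.fst_mem_support_of_mem_edges he'
  have hvb : b ∈ c'.support := c'.snd_mem_support_of_mem_edges he'
  have hadj : G.Adj a b := c'.adj_of_mem_edges he'
  obtain ⟨z, hzs, hzw⟩ : ∃ z, z ∈ c'.support ∧ z ≠ w := by
    by_cases hbw : b = w
    · exact ⟨a, hva, fun h => hadj.ne (h.trans hbw.symm)⟩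
    · exact ⟨b, hvb, hbw⟩
  have hvw : v ≠ w := fun h => hv (h ▸ hw)
  obtain ⟨p0, hp0⟩ := avoid h2 w (x := v) (y := z) hvw hzw
  obtain ⟨x, hxS, q, hq, hqS, hqsub⟩ := first_hit {y | y ∈ c'.support} p0 hzs
  have hwq : w ∉ q.support := fun h => hp0 (hqsub w h)
  have hxw : x ≠ w := fun h => hwq (h ▸ q.end_mem_support)
  have hxs : x ∈ c'.support := hxS
  obtain ⟨arc, harcP, harcE, harcS, _⟩ := arc_lemma c' hc' hxs hxw he'
  have hbig : (q.append arc).IsPath :=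
    isPath_append hq harcP (fun y hy1 hy2 => hqS y hy1 (harcS hy2))
  have hecons : s(w, v) ∉ (q.append arc).edges := by
    rw [edges_append, List.mem_append]
    rintro (h | h)
    · exact hwq (q.fst_mem_support_of_mem_edges h)
    · exact hv ((hsupp v).1 (harcS (arc.snd_mem_support_of_mem_edges h)))
  have hcyc := SimpleGraph.Path.cons_isCycle ⟨q.append arc, hbig⟩ hwv hecons
  refine ⟨w, _, hcyc, ?_, ?_⟩
  · rw [edges_cons]
    exact List.mem_cons_of_mem _ (by rw [edges_append, List.mem_append]; exact Or.inr harcE)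
  · rw [support_cons]
    exact List.mem_cons_of_mem _ (q.append arc).start_mem_support

lemma grow {G : SimpleGraph V} (h2 : KConn 2 G) {a b : V} :
    ∀ {v x : V} (p : G.Walk v x) (r : V) (c : G.Walk r r), c.IsCycle → s(a, b) ∈ c.edges →
      x ∈ c.support →
      ∃ (r' : V) (c' : G.Walk r' r'), c'.IsCycle ∧ s(a, b) ∈ c'.edges ∧ v ∈ c'.support := by
  intro v x p
  induction p with
  | nil => exact fun r c h1 h2' h3 => ⟨r, c, h1, h2', h3⟩
  | @cons v w x hadj p ih =>
    intro r c hc he hx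
    obtain ⟨r1, c1, hc1, he1, hw1⟩ := ih r c hc he hx
    by_cases hv : v ∈ c1.support
    · exact ⟨r1, c1, hc1, he1, hv⟩
    · exact extend h2 c1 hc1 he1 hw1 hv hadj.symm

lemma walk_exists {G : SimpleGraph V} (h2 : KConn 2 G) (u v : V) : Nonempty (G.Walk u v) := by
  by_cases h : u = v
  · subst h; exact ⟨Walk.nil⟩
  · obtain ⟨w, hw1, hw2⟩ := exists_third h2.1 u v
    obtain ⟨p, _⟩ := avoid h2 w (Ne.symm hw1) (Ne.symm hw2)
    exact ⟨p⟩

lemma cycle_through_edge_and_vertex {G : SimpleGraph V} (h2 : KConn 2 G) {a b : V}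
    (hab : G.Adj a b) (v : V) :
    ∃ (r : V) (c : G.Walk r r), c.IsCycle ∧ s(a, b) ∈ c.edges ∧ v ∈ c.support := by
  obtain ⟨r0, c0, hc0, he0⟩ := edge_cycle h2 hab
  have hb0 : b ∈ c0.support := c0.snd_mem_support_of_mem_edges he0
  obtain ⟨p⟩ := walk_exists h2 v b
  exact grow h2 p r0 c0 hc0 he0 hb0

end Stmt5Aux

end Stmt5AuxSection

theorem stmt5 {V : Type*} [Fintype V] (G : SimpleGraph V)
    (h2conn : KConn 2 G) (e f : Sym2 V)
    (he : e ∈ G.edgeSet) (hf : f ∈ G.edgeSet) :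
    ∃ (v : V) (c : G.Walk v v), c.IsCycle ∧ e ∈ c.edges ∧ f ∈ c.edges := by
    classical
  induction e using Sym2.ind with | _ a b =>
  induction f using Sym2.ind with | _ u2 v2 =>
  rw [SimpleGraph.mem_edgeSet] at he hf
  obtain ⟨r, C, hC, heC, hu2C⟩ := Stmt5Aux.cycle_through_edge_and_vertex h2conn he u2
  by_cases hfC : s(u2, v2) ∈ C.edges
  · exact ⟨r, C, hC, heC, hfC⟩
  set C' := C.rotate _ hu2C with hC'def
  have hC' : C'.IsCycle := hC.rotate hu2C
  have heC' : s(a, b) ∈ C'.edges := (Walk.rotate_edges C _ hu2C).mem_iff.2 heC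
  have hfC' : s(u2, v2) ∉ C'.edges := fun h => hfC ((Walk.rotate_edges C _ hu2C).mem_iff.1 h)
  have hadj : G.Adj a b := he
  by_cases hd : v2 ∈ C'.support
  · obtain ⟨arc, harcP, harcE, _, harcEsub⟩ := Stmt5Aux.arc_lemma C' hC' hd hf.ne' heC'
    have hee : s(u2, v2) ∉ arc.edges := fun h => hfC' (harcEsub h)
    have hcyc := SimpleGraph.Path.cons_isCycle ⟨arc, harcP⟩ hf hee
    refine ⟨u2, _, hcyc, ?_, ?_⟩
    · rw [Walk.edges_cons]; exact List.mem_cons_of_mem _ harcE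
    · rw [Walk.edges_cons]; exact List.mem_cons_self
  · have hva : a ∈ C'.support := C'.fst_mem_support_of_mem_edges heC'
    have hvb : b ∈ C'.support := C'.snd_mem_support_of_mem_edges heC'
    obtain ⟨z, hzs, hzu⟩ : ∃ z, z ∈ C'.support ∧ z ≠ u2 := by
      by_cases hbu : b = u2
      · exact ⟨a, hva, fun h => hadj.ne (h.trans hbu.symm)⟩
      · exact ⟨b, hvb, hbu⟩
    obtain ⟨p0, hp0⟩ := Stmt5Aux.avoid h2conn u2 (x := v2) (y := z) hf.ne' hzu
    obtain ⟨x, hxS, q, hq, hqS, hqsub⟩ := Stmt5Aux.first_hit {y | y ∈ C'.support} p0 hzs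
    have hu2q : u2 ∉ q.support := fun h => hp0 (hqsub u2 h)
    have hxu : x ≠ u2 := fun h => hu2q (h ▸ q.end_mem_support)
    have hxs : x ∈ C'.support := hxS
    obtain ⟨arc, harcP, harcE, harcS, harcEsub⟩ := Stmt5Aux.arc_lemma C' hC' hxs hxu heC'
    have hbig : (q.append arc).IsPath :=
      Stmt5Aux.isPath_append hq harcP (fun y hy1 hy2 => hqS y hy1 (harcS hy2))
    have hecons : s(u2, v2) ∉ (q.append arc).edges := by
      rw [Walk.edges_append, List.mem_append]
      rintro (h | h)
      · exact hu2q (q.fst_mem_support_of_mem_edges h)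
      · exact hfC' (harcEsub h)
    have hcyc := SimpleGraph.Path.cons_isCycle ⟨q.append arc, hbig⟩ hf hecons
    refine ⟨u2, _, hcyc, ?_, ?_⟩
    · rw [Walk.edges_cons]
      exact List.mem_cons_of_mem _
        (by rw [Walk.edges_append, List.mem_append]; exact Or.inr harcE)
    · rw [Walk.edges_cons]; exact List.mem_cons_self
end

section
/- For any pair of non-adjacent edges ab and cd of the complete bipartite graph K_{3,3}, the graph obtained from K_{3,3} by bridging ab and cd is isomorphic to V_8, the Möbius ladder on 8 vertices. -/
open SimpleGraph

section Aux
open Sum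

def BAdj {V : Type*} (H : SimpleGraph V) (a b c d : V) :
    (V ⊕ Fin 2) → (V ⊕ Fin 2) → Prop
  | inl p, inl q => H.Adj p q ∧ ¬((p = a ∧ q = b) ∨ (p = b ∧ q = a)) ∧
      ¬((p = c ∧ q = d) ∨ (p = d ∧ q = c))
  | inl p, inr t => (t = 0 ∧ (p = a ∨ p = b)) ∨ (t = 1 ∧ (p = c ∨ p = d))
  | inr t, inl p => (t = 0 ∧ (p = a ∨ p = b)) ∨ (t = 1 ∧ (p = c ∨ p = d))
  | inr s, inr t => s ≠ t

lemma bridge_adj {V : Type*} (H : SimpleGraph V) (a b c d : V) (u v : V ⊕ Fin 2) :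
    (Bridge H a b c d).Adj u v ↔ BAdj H a b c d u v := by
  rw [Bridge, SimpleGraph.fromEdgeSet_adj]
  cases u with
  | inl p =>
    cases v with
    | inl q =>
      simp only [BAdj, Set.mem_union, Set.mem_image, Set.mem_diff, Set.mem_insert_iff,
        Set.mem_singleton_iff, SimpleGraph.mem_edgeSet, Sym2.eq, Sym2.rel_iff', Prod.mk.injEq,
        Prod.swap_prod_mk, ne_eq, inl.injEq, reduceCtorEq, Sym2.exists, Sym2.map_pair_eq,
        or_false, false_or, and_false, false_and, exists_eq_right]
      constructor
      · rintro ⟨⟨x, y, ⟨hxy, hne⟩, (⟨rfl, rfl⟩ | ⟨rfl, rfl⟩)⟩, -⟩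
        · exact ⟨hxy, by tauto, by tauto⟩
        · exact ⟨hxy.symm, by tauto, by tauto⟩
      · rintro ⟨h1, h2, h3⟩
        exact ⟨⟨p, q, ⟨h1, by tauto⟩, Or.inl ⟨rfl, rfl⟩⟩, h1.ne⟩
    | inr t =>
      fin_cases t <;>
      · simp only [BAdj, Set.mem_union, Set.mem_image, Set.mem_insert_iff,
          Set.mem_singleton_iff, Sym2.eq, Sym2.rel_iff', Prod.mk.injEq, Prod.swap_prod_mk,
          ne_eq, inl.injEq, inr.injEq, reduceCtorEq, Sym2.exists, Sym2.map_pair_eq,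
          and_false, false_and, or_false, false_or]
        constructor
        · rintro ⟨h, -⟩
          rcases h with ⟨x, y, -, h⟩ | h <;> simp_all <;> tauto
        · rintro h
          refine ⟨Or.inr ?_, by simp⟩
          rcases h with ⟨h0, rfl | rfl⟩ | ⟨h1, rfl | rfl⟩ <;> simp_all <;> tauto
  | inr s =>
    cases v with
    | inl q =>
      fin_cases s <;>
      · simp only [BAdj, Set.mem_union, Set.mem_image, Set.mem_insert_iff,
          Set.mem_singleton_iff, Sym2.eq, Sym2.rel_iff', Prod.mk.injEq, Prod.swap_prod_mk,
          ne_eq, inl.injEq, inr.injEq, reduceCtorEq, Sym2.exists, Sym2.map_pair_eq,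
          and_false, false_and, or_false, false_or]
        constructor
        · rintro ⟨h, -⟩
          rcases h with ⟨x, y, -, h⟩ | h <;> simp_all <;> tauto
        · rintro h
          refine ⟨Or.inr ?_, by simp⟩
          rcases h with ⟨h0, rfl | rfl⟩ | ⟨h1, rfl | rfl⟩ <;> simp_all <;> tauto
    | inr t =>
      fin_cases s <;> fin_cases t <;>
      · simp only [BAdj, Set.mem_union, Set.mem_image, Set.mem_insert_iff,
          Set.mem_singleton_iff, Sym2.eq, Sym2.rel_iff', Prod.mk.injEq, Prod.swap_prod_mk,
          ne_eq, inr.injEq, reduceCtorEq, Sym2.exists, Sym2.map_pair_eq,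
          and_false, false_and, or_false, false_or]
        simp <;> tauto


instance BAdjDec {V : Type*} (H : SimpleGraph V) [DecidableRel H.Adj] [DecidableEq V]
    (a b c d : V) : DecidableRel (BAdj H a b c d) := fun u v => by
  cases u <;> cases v <;> (dsimp only [BAdj]; infer_instance)

instance K33adjDec : DecidableRel (completeBipartiteGraph (Fin 3) (Fin 3)).Adj := fun u v =>
  decidable_of_iff _ (Iff.of_eq (completeBipartiteGraph_adj _ _ u v).symm)

instance bridgeAdjDec (a b c d : Fin 3 ⊕ Fin 3) :
    DecidableRel (Bridge (completeBipartiteGraph (Fin 3) (Fin 3)) a b c d).Adj := fun u v =>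
  decidable_of_iff _ (bridge_adj _ a b c d u v).symm

instance mobDec : DecidableRel (MobiusV 4).Adj := fun u v =>
  decidable_of_iff ((u ≠ v) ∧ (u - v = 1 ∨ u - v = -1 ∨ u - v = (4:ℕ) ∨ v - u = 1 ∨ v - u = -1 ∨ v - u = (4:ℕ))) (by
    show _ ↔ (SimpleGraph.fromRel _).Adj u v
    rw [SimpleGraph.fromRel_adj]
    simp [MobiusV, Set.mem_insert_iff]
    tauto)

instance napDec (a b c d : Fin 3 ⊕ Fin 3) :
    Decidable (NonadjPair (completeBipartiteGraph (Fin 3) (Fin 3)) a b c d) := by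
  unfold NonadjPair; infer_instance

def sameSide : Fin 3 ⊕ Fin 3 → Fin 3 ⊕ Fin 3 → Bool
  | inl _, inl _ => true
  | inr _, inr _ => true
  | _, _ => false

def bmap (a b c d : Fin 3 ⊕ Fin 3) (v : (Fin 3 ⊕ Fin 3) ⊕ Fin 2) : ZMod 8 :=
  let c' := if sameSide a c then c else d
  let d' := if sameSide a c then d else c
  match v with
  | inr t => if t = 0 then 0 else 4
  | inl p =>
    if p = a then 1 else if p = b then 7 else if p = c' then 3 else if p = d' then 5
    else if sameSide p a then 6 else 2

set_option maxRecDepth 100000 in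
set_option maxHeartbeats 4000000 in
lemma bmap_key : ∀ a b c d : Fin 3 ⊕ Fin 3,
    NonadjPair (completeBipartiteGraph (Fin 3) (Fin 3)) a b c d →
    Function.Injective (bmap a b c d) ∧
    ∀ x y, (Bridge (completeBipartiteGraph (Fin 3) (Fin 3)) a b c d).Adj x y ↔
      (MobiusV 4).Adj (bmap a b c d x) (bmap a b c d y) := by decide

end Aux

theorem stmt9 (a b c d : Fin 3 ⊕ Fin 3)
    (hpair : NonadjPair (completeBipartiteGraph (Fin 3) (Fin 3)) a b c d) :
    Nonempty (Bridge (completeBipartiteGraph (Fin 3) (Fin 3)) a b c d ≃g MobiusV 4) := by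
  obtain ⟨hinj, hadj⟩ := bmap_key a b c d hpair
  have hbij : Function.Bijective (bmap a b c d) :=
    (Fintype.bijective_iff_injective_and_card _).2 ⟨hinj, by decide⟩
  exact ⟨⟨Equiv.ofBijective _ hbij, fun {x y} => (hadj x y).symm⟩⟩
end

section
/- For no pair of non-adjacent edges ab and cd of Q_8 (the cube graph) is the graph obtained from Q_8 by bridging ab and cd isomorphic to the Petersen graph P_{10}. -/
open SimpleGraph

instance petersenDec : DecidableRel Petersen.Adj := fun s t =>
  inferInstanceAs (Decidable (Disjoint (s : Finset (Fin 5)) (t : Finset (Fin 5))))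

instance ladderDec : DecidableRel (LadderQ 4).Adj := fun x y =>
  decidable_of_iff ((cycleGraph 4).Adj x.1 y.1 ∧ x.2 = y.2 ∨ x.2 ≠ y.2 ∧ x.1 = y.1)
    (by rw [LadderQ, SimpleGraph.boxProd_adj]; simp [completeGraph])

lemma petersen_no_c4 : ¬ ∃ p q r s : {s : Finset (Fin 5) // s.card = 2},
    Petersen.Adj p q ∧ Petersen.Adj q r ∧ Petersen.Adj r s ∧ Petersen.Adj s p ∧
    p ≠ r ∧ q ≠ s := by decide

set_option maxHeartbeats 4000000 in
set_option synthInstance.maxHeartbeats 1000000 in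
set_option synthInstance.maxSize 5000 in
lemma ladder_c4 : ∀ a b c d : Fin 4 × Fin 2,
    ((LadderQ 4).Adj a b ∧ (LadderQ 4).Adj c d ∧ a ≠ c ∧ a ≠ d ∧ b ≠ c ∧ b ≠ d) →
    ∃ p q r s : Fin 4 × Fin 2, (LadderQ 4).Adj p q ∧ (LadderQ 4).Adj q r ∧
      (LadderQ 4).Adj r s ∧ (LadderQ 4).Adj s p ∧ p ≠ r ∧ q ≠ s ∧
      s(p,q) ≠ s(a,b) ∧ s(p,q) ≠ s(c,d) ∧ s(q,r) ≠ s(a,b) ∧ s(q,r) ≠ s(c,d) ∧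
      s(r,s) ≠ s(a,b) ∧ s(r,s) ≠ s(c,d) ∧ s(s,p) ≠ s(a,b) ∧ s(s,p) ≠ s(c,d) := by decide

lemma bridge_adj_inl {V : Type*} (H : SimpleGraph V) (a b c d u v : V)
    (h : H.Adj u v) (h1 : s(u,v) ≠ s(a,b)) (h2 : s(u,v) ≠ s(c,d)) :
    (Bridge H a b c d).Adj (Sum.inl u) (Sum.inl v) := by
  rw [Bridge, SimpleGraph.fromEdgeSet_adj]
  refine ⟨Or.inl ⟨s(u,v), ⟨h, by simp [h1, h2]⟩, rfl⟩, by simp [h.ne]⟩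

theorem stmt17 (a b c d : Fin 4 × Fin 2)
    (hpair : NonadjPair (LadderQ 4) a b c d) :
    ¬ Nonempty (Bridge (LadderQ 4) a b c d ≃g Petersen) := by
  rintro ⟨φ⟩
  obtain ⟨hab, hcd, hac, had, hbc, hbd⟩ := hpair
  obtain ⟨p, q, r, s, h1, h2, h3, h4, hpr, hqs, e1, e2, e3, e4, e5, e6, e7, e8⟩ :=
    ladder_c4 a b c d ⟨hab, hcd, hac, had, hbc, hbd⟩
  refine petersen_no_c4 ⟨φ (Sum.inl p), φ (Sum.inl q), φ (Sum.inl r), φ (Sum.inl s),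
    φ.map_adj_iff.mpr (bridge_adj_inl _ a b c d _ _ h1 e1 e2),
    φ.map_adj_iff.mpr (bridge_adj_inl _ a b c d _ _ h2 e3 e4),
    φ.map_adj_iff.mpr (bridge_adj_inl _ a b c d _ _ h3 e5 e6),
    φ.map_adj_iff.mpr (bridge_adj_inl _ a b c d _ _ h4 e7 e8),
    fun h => hpr (Sum.inl.inj (φ.toEquiv.injective h)),
    fun h => hqs (Sum.inl.inj (φ.toEquiv.injective h))⟩
end
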